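/- There exists a constant C > 0 such that for all points z₁, w₁, z₂, w₂ ∈ ℝ² with r := min(|z₁−z₂|, |z₁−w₂|, |w₁−z₂|, |w₁−w₂|) > 0, one has |log|z₁−z₂| + log|w₁−w₂| − log|z₁−w₂| − log|w₁−z₂|| ≤ C |z₁−w₁| |z₂−w₂| / r². -/

import Mathlib

private lemma abs_log_sub_log_le {a b : ℝ} (ha : 0 < a) (hb : 0 < b) :
    |Real.log a - Real.log b| ≤ |a - b| / min a b := by
  have key : ∀ x y : ℝ, 0 < x → 0 < y → y ≤ x →
      Real.log x - Real.log y ≤ (x - y) / y := by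
    intro x y hx hy hyx
    have h1 : Real.log x - Real.log y = Real.log (x / y) := by
      rw [Real.log_div hx.ne' hy.ne']
    rw [h1]
    have h2 : Real.log (x / y) ≤ x / y - 1 :=
      Real.log_le_sub_one_of_pos (div_pos hx hy)
    have h3 : x / y - 1 = (x - y) / y := by field_simp
    linarith
  rcases le_total b a with h | h
  · rw [min_eq_right h, abs_of_nonneg (sub_nonneg.mpr h)]
    have hlog : 0 ≤ Real.log a - Real.log b :=
      sub_nonneg.mpr (Real.log_le_log hb h)
    rw [abs_of_nonneg hlog]
    exact key a b ha hb h
  · rw [min_eq_left h, abs_of_nonpos (sub_nonpos.mpr h)]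
    have hlog : Real.log a - Real.log b ≤ 0 :=
      sub_nonpos.mpr (Real.log_le_log ha h)
    rw [abs_of_nonpos hlog]
    have := key b a hb ha h
    simp only [neg_sub]
    linarith [key b a hb ha h]

private def toC (z : EuclideanSpace ℝ (Fin 2)) : ℂ := ⟨z 0, z 1⟩

private lemma dist_toC (z w : EuclideanSpace ℝ (Fin 2)) :
    ‖toC z - toC w‖ = dist z w := by
  rw [EuclideanSpace.dist_eq, Fin.sum_univ_two]
  rw [Complex.norm_def]
  congr 1
  simp [toC, Complex.normSq_apply, Real.dist_eq, sq_abs]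
  ring

/-- Second-difference estimate for the logarithmic kernel in `ℝ²`. -/
theorem log_kernel_cross_estimate :
    ∃ C : ℝ, 0 < C ∧
      ∀ z₁ w₁ z₂ w₂ : EuclideanSpace ℝ (Fin 2),
        0 < min (min (dist z₁ z₂) (dist z₁ w₂)) (min (dist w₁ z₂) (dist w₁ w₂)) →
        |Real.log (dist z₁ z₂) + Real.log (dist w₁ w₂) -
            Real.log (dist z₁ w₂) - Real.log (dist w₁ z₂)| ≤
          C * dist z₁ w₁ * dist z₂ w₂ /
            (min (min (dist z₁ z₂) (dist z₁ w₂)) (min (dist w₁ z₂) (dist w₁ w₂))) ^ 2 := by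
  refine ⟨1, one_pos, fun z₁ w₁ z₂ w₂ hr => ?_⟩
  set r := min (min (dist z₁ z₂) (dist z₁ w₂)) (min (dist w₁ z₂) (dist w₁ w₂)) with hrdef
  set a := dist z₁ z₂
  set b := dist w₁ w₂
  set c := dist z₁ w₂
  set d := dist w₁ z₂
  have hra : r ≤ a := le_trans (min_le_left _ _) (min_le_left _ _)
  have hrc : r ≤ c := le_trans (min_le_left _ _) (min_le_right _ _)
  have hrd : r ≤ d := le_trans (min_le_right _ _) (min_le_left _ _)
  have hrb : r ≤ b := le_trans (min_le_right _ _) (min_le_right _ _)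
  have ha : 0 < a := lt_of_lt_of_le hr hra
  have hb : 0 < b := lt_of_lt_of_le hr hrb
  have hc : 0 < c := lt_of_lt_of_le hr hrc
  have hd : 0 < d := lt_of_lt_of_le hr hrd
  -- complex identity
  set A : ℂ := (toC z₁ - toC z₂) * (toC w₁ - toC w₂)
  set B : ℂ := (toC z₁ - toC w₂) * (toC w₁ - toC z₂)
  have hAB : A - B = (toC z₁ - toC w₁) * (toC z₂ - toC w₂) := by
    simp only [A, B]; ring
  have hAabs : ‖A‖ = a * b := by
    simp only [A, norm_mul, dist_toC]; rfl
  have hBabs : ‖B‖ = c * d := by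
    simp only [B, norm_mul, dist_toC]; rfl
  have hABabs : ‖A - B‖ = dist z₁ w₁ * dist z₂ w₂ := by
    rw [hAB, norm_mul, dist_toC, dist_toC]
  have hnum : |a * b - c * d| ≤ dist z₁ w₁ * dist z₂ w₂ := by
    rw [← hAabs, ← hBabs, ← hABabs]
    exact abs_norm_sub_norm_le A B
  have hE : Real.log a + Real.log b - Real.log c - Real.log d
      = Real.log (a * b) - Real.log (c * d) := by
    rw [Real.log_mul ha.ne' hb.ne', Real.log_mul hc.ne' hd.ne']
    ring
  rw [hE]
  have hmin : r ^ 2 ≤ min (a * b) (c * d) := by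
    have h1 : r ^ 2 ≤ a * b := by nlinarith
    have h2 : r ^ 2 ≤ c * d := by nlinarith
    exact le_min h1 h2
  calc |Real.log (a * b) - Real.log (c * d)|
      ≤ |a * b - c * d| / min (a * b) (c * d) :=
        abs_log_sub_log_le (mul_pos ha hb) (mul_pos hc hd)
    _ ≤ (dist z₁ w₁ * dist z₂ w₂) / r ^ 2 :=
        div_le_div₀ (by positivity) hnum (by positivity) hmin
    _ = 1 * dist z₁ w₁ * dist z₂ w₂ / r ^ 2 := by ring
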